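/- For fixed κ ∈ R and t ∈ (0,1), define f^{(T)}_κ(x) = (−t^{1 + 2^{-4/3} T^{1/3}(κ−x)}; t²)_∞ / (−t^{2^{-4/3} T^{1/3}(κ−x)}; t²)_∞ − 1. Then f^{(T)}_κ(x) converges pointwise as T → ∞ to −1_{x > κ} for x ≠ κ. -/

import Mathlib

open Filter

/-- Infinite q-Pochhammer symbol `(a; q)_∞ = ∏_{k≥0} (1 - a qᵏ)`. -/
noncomputable def qPochInf (a q : ℝ) : ℝ := ∏' k : ℕ, (1 - a * q ^ k)

/-- `f^{(T)}_κ(x)` as in the GOE asymptotics of half-line ASEP. -/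
noncomputable def fT (t κ x T : ℝ) : ℝ :=
  qPochInf (-(t ^ (1 + (2 : ℝ) ^ (-(4 : ℝ) / 3) * T ^ ((1 : ℝ) / 3) * (κ - x)))) (t ^ 2) /
      qPochInf (-(t ^ ((2 : ℝ) ^ (-(4 : ℝ) / 3) * T ^ ((1 : ℝ) / 3) * (κ - x)))) (t ^ 2)
    - 1




section aux
open Real
variable {q t : ℝ}

lemma summable_log_one_add (hq0 : 0 < q) (hq1 : q < 1) {a : ℝ} (ha : 0 ≤ a) :
    Summable fun k : ℕ => Real.log (1 + a * q ^ k) := by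
  refine Summable.of_nonneg_of_le (fun k => Real.log_nonneg (by nlinarith [pow_pos hq0 k]))
    (fun k => ?_) ((summable_geometric_of_lt_one hq0.le hq1).mul_left a)
  show Real.log (1 + a * q ^ k) ≤ a * q ^ k
  have h := Real.log_le_sub_one_of_pos (x := 1 + a * q ^ k)
    (by nlinarith [pow_pos hq0 k])
  linarith

noncomputable def Lq (q a : ℝ) : ℝ := ∑' k : ℕ, Real.log (1 + a * q ^ k)

lemma Lq_nonneg (hq0 : 0 < q) {a : ℝ} (ha : 0 ≤ a) : 0 ≤ Lq q a :=
  tsum_nonneg fun k => Real.log_nonneg (by nlinarith [pow_pos hq0 k])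

lemma Lq_le (hq0 : 0 < q) (hq1 : q < 1) {a : ℝ} (ha : 0 ≤ a) :
    Lq q a ≤ a * (1 - q)⁻¹ := by
  have h := Summable.tsum_le_tsum (f := fun k : ℕ => Real.log (1 + a * q ^ k))
    (g := fun k : ℕ => a * q ^ k) (fun k => by
      have h := Real.log_le_sub_one_of_pos (x := 1 + a * q ^ k)
        (by nlinarith [pow_pos hq0 k])
      show Real.log (1 + a * q ^ k) ≤ a * q ^ k
      linarith)
    (summable_log_one_add hq0 hq1 ha)
    ((summable_geometric_of_lt_one hq0.le hq1).mul_left a)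
  calc Lq q a ≤ ∑' k : ℕ, a * q ^ k := h
    _ = a * (1 - q)⁻¹ := by rw [tsum_mul_left, tsum_geometric_of_lt_one hq0.le hq1]

lemma Lq_shift (hq0 : 0 < q) (hq1 : q < 1) {a : ℝ} (ha : 0 ≤ a) :
    Lq q a = Real.log (1 + a) + Lq q (q * a) := by
  have := Summable.tsum_eq_zero_add (summable_log_one_add hq0 hq1 ha)
  rw [Lq, this]
  simp only [pow_zero, mul_one, Lq]
  congr 1
  refine tsum_congr fun k => ?_
  ring_nf

lemma Lq_sq_le (hq0 : 0 < q) (hq1 : q < 1) (ht0 : 0 ≤ t) {a : ℝ} (ha : 0 ≤ a) :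
    2 * Lq q (t * a) ≤ Lq q a + Lq q (t ^ 2 * a) := by
  have hsum1 := summable_log_one_add hq0 hq1 ha
  have hsum2 := summable_log_one_add hq0 hq1 (a := t * a) (by positivity)
  have hsum3 := summable_log_one_add hq0 hq1 (a := t ^ 2 * a) (by positivity)
  have key : ∀ k : ℕ, 2 * Real.log (1 + t * a * q ^ k) ≤
      Real.log (1 + a * q ^ k) + Real.log (1 + t ^ 2 * a * q ^ k) := by
    intro k
    have hqk : 0 < q ^ k := pow_pos hq0 k
    have hu0 : 0 ≤ a * q ^ k := by positivity
    have h2 : (0:ℝ) < 1 + a * q ^ k := by nlinarith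
    have h3 : (0:ℝ) < 1 + t ^ 2 * (a * q ^ k) := by nlinarith
    have hineq : (1 + t * (a * q ^ k)) ^ 2 ≤ (1 + a * q ^ k) * (1 + t ^ 2 * (a * q ^ k)) := by
      nlinarith [sq_nonneg (1 - t), sq_nonneg t]
    have hlog := Real.log_le_log (by positivity) hineq
    rw [Real.log_pow, Real.log_mul h2.ne' h3.ne'] at hlog
    push_cast at hlog
    calc 2 * Real.log (1 + t * a * q ^ k) = 2 * Real.log (1 + t * (a * q ^ k)) := by ring_nf
      _ ≤ Real.log (1 + a * q ^ k) + Real.log (1 + t ^ 2 * (a * q ^ k)) := hlog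
      _ = Real.log (1 + a * q ^ k) + Real.log (1 + t ^ 2 * a * q ^ k) := by ring_nf
  have := Summable.tsum_le_tsum key (hsum2.mul_left 2) (hsum1.add hsum3)
  rw [tsum_mul_left, Summable.tsum_add hsum1 hsum3] at this
  convert this using 2 <;> rfl

lemma qPochInf_eq_exp (hq0 : 0 < q) (hq1 : q < 1) {a : ℝ} (ha : 0 ≤ a) :
    qPochInf (-a) q = Real.exp (Lq q a) := by
  have h := Real.rexp_tsum_eq_tprod (f := fun (k : ℕ) => 1 + a * q ^ k)
    (fun k => by show (0:ℝ) < 1 + a * q ^ k; nlinarith [pow_pos hq0 k])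
    (summable_log_one_add hq0 hq1 ha)
  have h2 := h
  rw [qPochInf]
  have hc : ∀ k : ℕ, 1 - (-a) * q ^ k = 1 + a * q ^ k := fun k => by ring
  rw [tprod_congr hc, ← h2]
  rfl

end aux

/-- For fixed `κ` and `t ∈ (0,1)`, `f^{(T)}_κ(x) → −1_{x > κ}` pointwise as `T → ∞`,
for `x ≠ κ`. -/
theorem fT_tendsto_indicator (t : ℝ) (ht0 : 0 < t) (ht1 : t < 1) (κ x : ℝ)
    (hx : x ≠ κ) :
    Tendsto (fun T : ℝ => fT t κ x T) atTop
      (nhds (if κ < x then (-1 : ℝ) else 0)) := by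
  set q : ℝ := t ^ 2 with hqdef
  have hq0 : 0 < q := by positivity
  have hq1 : q < 1 := by nlinarith
  set y : ℝ → ℝ := fun T => (2 : ℝ) ^ (-(4 : ℝ) / 3) * T ^ ((1 : ℝ) / 3) * (κ - x) with hy
  set a : ℝ → ℝ := fun T => t ^ (y T) with ha
  have ha_pos : ∀ T, 0 < a T := fun T => Real.rpow_pos_of_pos ht0 _
  have hfT : ∀ T, fT t κ x T = Real.exp (Lq q (t * a T) - Lq q (a T)) - 1 := by
    intro T
    have h1 : t ^ (1 + y T) = t * a T := by
      rw [ha, Real.rpow_add ht0, Real.rpow_one]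
    rw [fT]
    show qPochInf (-(t ^ (1 + y T))) q / qPochInf (-(t ^ (y T))) q - 1 = _
    rw [h1, qPochInf_eq_exp hq0 hq1 (by positivity),
      qPochInf_eq_exp hq0 hq1 (ha_pos T).le, ← Real.exp_sub]
  have hD_upper : ∀ b : ℝ, 0 ≤ b → Lq q (t * b) - Lq q b ≤ -Real.log (1 + b) / 2 := by
    intro b hb
    have h1 := Lq_sq_le hq0 hq1 ht0.le hb
    have h2 := Lq_shift hq0 hq1 hb
    have h3 : q * b = t ^ 2 * b := by rw [hqdef]
    rw [h3] at h2
    linarith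
  have hD_abs : ∀ b : ℝ, 0 ≤ b → |Lq q (t * b) - Lq q b| ≤ b * (1 - q)⁻¹ := by
    intro b hb
    have hinv : (0:ℝ) ≤ (1 - q)⁻¹ := by
      rw [inv_nonneg]; linarith
    rw [abs_le]
    constructor
    · have h1 := Lq_nonneg hq0 (a := t * b) (by positivity)
      have h2 := Lq_le hq0 hq1 hb
      nlinarith
    · have h1 := Lq_le hq0 hq1 (a := t * b) (by positivity)
      have h2 := Lq_nonneg hq0 hb
      have h3 : t * b ≤ b := by nlinarith
      have h4 : t * b * (1 - q)⁻¹ ≤ b * (1 - q)⁻¹ := mul_le_mul_of_nonneg_right h3 hinv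
      linarith
  by_cases hlt : κ < x
  · rw [if_pos hlt]
    have hyb : Tendsto y atTop atBot := by
      have h1 : Tendsto (fun T : ℝ => T ^ ((1:ℝ)/3) *
          ((2 : ℝ) ^ (-(4 : ℝ) / 3) * (κ - x))) atTop atBot := by
        refine (tendsto_rpow_atTop (by norm_num)).atTop_mul_const_of_neg ?_
        have h2 : (0:ℝ) < (2 : ℝ) ^ (-(4 : ℝ) / 3) := by positivity
        nlinarith
      refine h1.congr fun T => by rw [hy]; ring
    have ha_top : Tendsto a atTop atTop := by
      have h1 : Tendsto (fun T => y T * Real.log t) atTop atTop :=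
        hyb.atBot_mul_const_of_neg (Real.log_neg ht0 ht1)
      have h2 := Real.tendsto_exp_atTop.comp h1
      refine h2.congr fun T => ?_
      simp only [Function.comp, ha]
      rw [Real.rpow_def_of_pos ht0, mul_comm]
    have hu : Tendsto (fun T => Real.exp (-Real.log (1 + a T) / 2)) atTop (nhds 0) := by
      have h1 : Tendsto (fun T => 1 + a T) atTop atTop :=
        tendsto_atTop_add_const_left atTop 1 ha_top
      have h2 : Tendsto (fun T => Real.log (1 + a T)) atTop atTop :=
        Real.tendsto_log_atTop.comp h1
      have h3 : Tendsto (fun T => Real.log (1 + a T) * (-1/2)) atTop atBot :=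
        h2.atTop_mul_const_of_neg (by norm_num)
      have h4 := Real.tendsto_exp_atBot.comp h3
      refine h4.congr fun T => ?_
      simp only [Function.comp]
      ring_nf
    have hsq : Tendsto (fun T => Real.exp (Lq q (t * a T) - Lq q (a T))) atTop (nhds 0) := by
      refine squeeze_zero (fun T => (Real.exp_pos _).le) (fun T => ?_) hu
      exact Real.exp_le_exp.2 (hD_upper (a T) (ha_pos T).le)
    have := hsq.sub_const 1
    rw [zero_sub] at this
    exact this.congr fun T => (hfT T).symm
  · rw [if_neg hlt]
    have hxκ : x < κ := lt_of_le_of_ne (not_lt.1 hlt) hx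
    have hyt : Tendsto y atTop atTop := by
      have h1 : Tendsto (fun T : ℝ => T ^ ((1:ℝ)/3) *
          ((2 : ℝ) ^ (-(4 : ℝ) / 3) * (κ - x))) atTop atTop := by
        refine (tendsto_rpow_atTop (by norm_num)).atTop_mul_const ?_
        have h2 : (0:ℝ) < (2 : ℝ) ^ (-(4 : ℝ) / 3) := by positivity
        nlinarith
      refine h1.congr fun T => by rw [hy]; ring
    have ha0 : Tendsto a atTop (nhds 0) := by
      have h1 : Tendsto (fun T => y T * Real.log t) atTop atBot :=
        hyt.atTop_mul_const_of_neg (Real.log_neg ht0 ht1)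
      have h2 := Real.tendsto_exp_atBot.comp h1
      refine h2.congr fun T => ?_
      simp only [Function.comp, ha]
      rw [Real.rpow_def_of_pos ht0, mul_comm]
    have hb0 : Tendsto (fun T => a T * (1 - q)⁻¹) atTop (nhds 0) := by
      have := ha0.mul_const (1 - q)⁻¹
      rwa [zero_mul] at this
    have hD0 : Tendsto (fun T => Lq q (t * a T) - Lq q (a T)) atTop (nhds 0) :=
      squeeze_zero_norm (fun T => by
        rw [Real.norm_eq_abs]; exact hD_abs (a T) (ha_pos T).le) hb0
    have hexp : Tendsto (fun T => Real.exp (Lq q (t * a T) - Lq q (a T))) atTop (nhds 1) := by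
      have := (Real.continuous_exp.tendsto 0).comp hD0
      rwa [Real.exp_zero] at this
    have := hexp.sub_const 1
    rw [sub_self] at this
    exact this.congr fun T => (hfT T).symm
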